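/- Let σ > 0, t > 0, and let ε be a real random variable with law N(0, σ²). Then for every integer k ≥ 1, E[((ε − t)₊)^k] ≤ k! · σ^{2k+1} · φ(t/σ) / t^{k+1}, where φ(x) = e^{−x²/2}/√(2π). -/

import Mathlib

open MeasureTheory ProbabilityTheory

/-- The standard normal density `φ(x) = e^{-x²/2}/√(2π)`. -/
noncomputable def stdNormalPdf (x : ℝ) : ℝ := Real.exp (-x ^ 2 / 2) / Real.sqrt (2 * Real.pi)

/-- moment bound for the positive excess of a centered Gaussian:
`E[((ε-t)₊)^k] ≤ k! σ^{2k+1} φ(t/σ) / t^{k+1}`. -/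
theorem gaussian_excess_moment_bound (σ t : ℝ) (hσ : 0 < σ) (ht : 0 < t)
    (k : ℕ) (hk : 1 ≤ k) :
    (∫ x, (max (x - t) 0) ^ k ∂(gaussianReal 0 ⟨σ ^ 2, sq_nonneg σ⟩)) ≤
      (Nat.factorial k : ℝ) * σ ^ (2 * k + 1) * stdNormalPdf (t / σ) / t ^ (k + 1) := by
  set V : NNReal := ⟨σ ^ 2, sq_nonneg σ⟩ with hV
  have hVc : (V : ℝ) = σ ^ 2 := rfl
  have hσ2 : (0:ℝ) < σ ^ 2 := pow_pos hσ 2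
  have hv : V ≠ 0 := by
    intro h
    have : (V : ℝ) = 0 := by rw [h]; rfl
    rw [hVc] at this; exact hσ2.ne' this
  have hkne : k ≠ 0 := by omega
  set c : ℝ := t / σ ^ 2 with hc
  have hcpos : 0 < c := div_pos ht hσ2
  set C : ℝ := gaussianPDFReal 0 V t with hC
  have hCpos : 0 < C := gaussianPDFReal_pos 0 V t hv
  -- the dominating function
  set g : ℝ → ℝ := fun u => (max u 0) ^ k * Real.exp (-(c * u)) with hg
  -- rewrite the Gaussian integral as a Lebesgue integral
  have hmeas : Measurable fun x => (gaussianPDFReal 0 V x).toNNReal :=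
    (measurable_gaussianPDFReal 0 V).real_toNNReal
  have hrw : (∫ x, (max (x - t) 0) ^ k ∂(gaussianReal 0 V))
      = ∫ x, gaussianPDFReal 0 V x * (max (x - t) 0) ^ k := by
    rw [gaussianReal_of_var_ne_zero 0 hv]
    have : gaussianPDF 0 V = fun x => ((gaussianPDFReal 0 V x).toNNReal : ENNReal) := rfl
    rw [this, integral_withDensity_eq_integral_smul hmeas]
    refine integral_congr_ae (Filter.Eventually.of_forall fun x => ?_)
    simp only [NNReal.smul_def, Real.coe_toNNReal _ (gaussianPDFReal_nonneg 0 V x),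
      smul_eq_mul]
  -- pointwise bound
  have hbound : ∀ x, gaussianPDFReal 0 V x * (max (x - t) 0) ^ k ≤ C * g (x - t) := by
    intro x
    rcases le_or_gt x t with hx | hx
    · have : max (x - t) 0 = 0 := max_eq_right (by linarith)
      rw [this, zero_pow hkne, mul_zero]
      have : g (x - t) = 0 := by
        rw [hg]; simp only [this, zero_pow hkne, zero_mul]
      rw [this, mul_zero]
    · have hxt : (0:ℝ) ≤ x - t := by linarith
      have hmax : max (x - t) 0 = x - t := max_eq_left hxt
      have hpdf : gaussianPDFReal 0 V x ≤ C * Real.exp (-(c * (x - t))) := by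
        have hCe : C * Real.exp (-(c * (x - t)))
            = (Real.sqrt (2 * Real.pi * V))⁻¹ *
              Real.exp (-(t - 0) ^ 2 / (2 * (V:ℝ)) + -(c * (x - t))) := by
          rw [hC, gaussianPDFReal, Real.exp_add]; ring
        rw [hCe, gaussianPDFReal]
        refine mul_le_mul_of_nonneg_left ?_ (by positivity)
        refine Real.exp_le_exp.mpr ?_
        rw [hVc, hc]
        have hdiff : (-(t-0)^2/(2*σ^2) + -(t/σ^2*(x-t))) - (-(x-0)^2/(2*σ^2))
            = (x-t)^2/(2*σ^2) := by field_simp; ring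
        have hnn : (0:ℝ) ≤ (x-t)^2/(2*σ^2) := by positivity
        linarith
      calc gaussianPDFReal 0 V x * (max (x - t) 0) ^ k
          ≤ (C * Real.exp (-(c * (x - t)))) * (max (x - t) 0) ^ k := by
            exact mul_le_mul_of_nonneg_right hpdf (by positivity)
        _ = C * g (x - t) := by simp only [hg, hmax]; ring
  -- integrability of the dominating function
  have hint0 : IntegrableOn (fun u : ℝ => u ^ k * Real.exp (-(c * u))) (Set.Ioi 0) := by
    refine integrable_of_isBigO_exp_neg (b := c / 2) (by positivity)
      (by fun_prop) ?_
    have htend : Filter.Tendsto (fun x : ℝ => x ^ k * Real.exp (-(c/2) * x))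
        Filter.atTop (nhds 0) := by
      have := tendsto_rpow_mul_exp_neg_mul_atTop_nhds_zero (k : ℝ) (c/2) (by positivity)
      refine this.congr fun x => ?_
      rw [Real.rpow_natCast]
    refine (Asymptotics.isLittleO_of_tendsto (fun x hx => absurd hx (Real.exp_ne_zero _))
      ?_).isBigO
    refine htend.congr fun x => ?_
    rw [eq_div_iff (Real.exp_ne_zero _), mul_assoc, ← Real.exp_add]
    ring_nf
  have hgind : g = Set.indicator (Set.Ioi 0) (fun u : ℝ => u ^ k * Real.exp (-(c * u))) := by
    funext u
    rcases le_or_gt u 0 with hu | hu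
    · rw [Set.indicator_of_notMem (by simpa using hu), hg]
      simp [max_eq_right hu, zero_pow hkne]
    · rw [Set.indicator_of_mem (by simpa using hu), hg]
      simp [max_eq_left hu.le]
  have hgint : Integrable g := by
    rw [hgind]
    exact hint0.integrable_indicator measurableSet_Ioi
  have hint : Integrable (fun x => C * g (x - t)) :=
    (hgint.comp_sub_right t).const_mul C
  -- compare
  have hle : (∫ x, gaussianPDFReal 0 V x * (max (x - t) 0) ^ k) ≤ ∫ x, C * g (x - t) := by
    refine integral_mono_of_nonneg (Filter.Eventually.of_forall fun x => ?_) hint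
      (Filter.Eventually.of_forall hbound)
    exact mul_nonneg (gaussianPDFReal_nonneg 0 V x) (by positivity)
  -- compute the dominating integral
  have hval : (∫ x, C * g (x - t)) = C * ((1/c) ^ (k+1) * (Nat.factorial k : ℝ)) := by
    rw [integral_const_mul, integral_sub_right_eq_self g t, hgind,
      integral_indicator measurableSet_Ioi]
    congr 1
    have h1 := Real.integral_rpow_mul_exp_neg_mul_Ioi
      (a := (k:ℝ) + 1) (r := c) (by positivity) hcpos
    rw [show ((k:ℝ) + 1 - 1) = (k:ℝ) by ring] at h1
    have h2 : ∀ u ∈ Set.Ioi (0:ℝ),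
        u ^ k * Real.exp (-(c * u)) = u ^ ((k:ℝ)) * Real.exp (-(c * u)) :=
      fun u _ => by rw [Real.rpow_natCast]
    rw [setIntegral_congr_fun measurableSet_Ioi h2, h1,
      show ((1:ℝ)/c) ^ ((k:ℝ)+1) = (1/c)^(k+1) by
        rw [show ((k:ℝ)+1) = ((k+1:ℕ):ℝ) by push_cast; ring, Real.rpow_natCast],
      Real.Gamma_nat_eq_factorial]
  rw [← hrw, hval] at hle
  refine hle.trans_eq ?_
  rw [hC, gaussianPDFReal, stdNormalPdf, hVc, hc]
  have hsqrt : Real.sqrt (2 * Real.pi * σ ^ 2) = Real.sqrt (2 * Real.pi) * σ := by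
    rw [Real.sqrt_mul (by positivity), Real.sqrt_sq hσ.le]
  have hexp : -(t - 0) ^ 2 / (2 * (σ^2:ℝ)) = -(t/σ)^2/2 := by
    field_simp; ring
  rw [hsqrt, hexp]
  try simp only [hc]
  have hs : Real.sqrt (2 * Real.pi) ≠ 0 := by positivity
  rw [one_div_div, div_pow]
  have hpow : (σ ^ 2) ^ (k + 1) = σ ^ (2 * k + 1) * σ := by
    rw [← pow_mul, ← pow_succ]; ring_nf
  rw [div_pow, hpow]
  field_simp
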